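/- Let Λ be an even lattice, let S be a primitive hyperbolic sublattice of Λ on which the form is nondegenerate, and suppose the orthogonal complement R of S in Λ is negative definite. For x ∈ Λ, let x_S denote the orthogonal projection of x to S⊗ℚ. Let w ∈ Λ be a vector with (w_S)² > 0. Then the set Δ_w := {r ∈ Λ : r² = −2, ⟨w,r⟩ = 1, (r_S)² < 0} is finite. -/

import Mathlib

namespace K3Aut

variable {n : ℕ}

/-- The real symmetric bilinear pairing on `L ⊗ ℝ = ℝⁿ` determined by an
integral Gram matrix `B`. -/
def pair (B : Matrix (Fin n) (Fin n) ℤ) (x y : Fin n → ℝ) : ℝ :=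
  ∑ i, ∑ j, x i * (B i j : ℝ) * y j

/-- `x` is a point of the lattice `L` (integer coordinates). -/
def isLat (x : Fin n → ℝ) : Prop := ∀ i, ∃ k : ℤ, x i = (k : ℝ)

/-- `x` has rational coordinates (a point of `L ⊗ ℚ`). -/
def isRatPt (x : Fin n → ℝ) : Prop := ∀ i, ∃ q : ℚ, x i = (q : ℝ)

/-- `x` is a point of the dual lattice `L∨ ⊆ L ⊗ ℚ`. -/
def isDual (B : Matrix (Fin n) (Fin n) ℤ) (x : Fin n → ℝ) : Prop :=
  isRatPt x ∧ ∀ y : Fin n → ℝ, isLat y → ∃ k : ℤ, pair B x y = (k : ℝ)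

/-- The Gram matrix `B` is symmetric, nondegenerate and even. -/
def IsEvenLat (B : Matrix (Fin n) (Fin n) ℤ) : Prop :=
  B.IsSymm ∧ B.det ≠ 0 ∧ ∀ i, Even (B i i)

/-- The form restricted to the subspace `W` is nondegenerate with exactly one
positive direction, i.e. of signature `(1, dim W - 1)`. -/
def IsHypOn (B : Matrix (Fin n) (Fin n) ℤ) (W : Submodule ℝ (Fin n → ℝ)) : Prop :=
  (∃ x ∈ W, 0 < pair B x x) ∧
  (∀ x ∈ W, ∀ y ∈ W, 0 < pair B x x → 0 < pair B y y →
      pair B x x * pair B y y ≤ pair B x y ^ 2) ∧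
  (∀ x ∈ W, (∀ y ∈ W, pair B x y = 0) → x = 0)

/-- The lattice is hyperbolic: rank `n > 1` and signature `(1, n-1)`. -/
def IsHyperbolic (B : Matrix (Fin n) (Fin n) ℤ) : Prop :=
  1 < n ∧ IsHypOn B ⊤

/-- `P` is a positive cone: a connected component of the set of positive-norm
vectors of `L ⊗ ℝ`. -/
def IsPosCone (B : Matrix (Fin n) (Fin n) ℤ) (P : Set (Fin n → ℝ)) : Prop :=
  ∃ x, 0 < pair B x x ∧ P = connectedComponentIn {y | 0 < pair B y y} x

/-- The hyperplane `(v)⊥` of `P`. -/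
def perp (B : Matrix (Fin n) (Fin n) ℤ) (P : Set (Fin n → ℝ)) (v : Fin n → ℝ) :
    Set (Fin n → ℝ) := {x ∈ P | pair B x v = 0}

/-- `V ⊆ {v ∈ L∨ : v² < 0}`. -/
def DualNeg (B : Matrix (Fin n) (Fin n) ℤ) (V : Set (Fin n → ℝ)) : Prop :=
  ∀ v ∈ V, isDual B v ∧ pair B v v < 0

/-- Condition [V1]: the norms of the vectors of `V` are bounded. -/
def CondV1 (B : Matrix (Fin n) (Fin n) ℤ) (V : Set (Fin n → ℝ)) : Prop :=
  ∃ c : ℝ, 0 < c ∧ ∀ v ∈ V, -pair B v v < c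

/-- The cone `Σ_L(Δ)`. -/
def SigmaCone (B : Matrix (Fin n) (Fin n) ℤ) (Δ : Set (Fin n → ℝ)) :
    Set (Fin n → ℝ) :=
  {x | ∀ v ∈ Δ, 0 ≤ pair B x v}

/-- `D` is a `V*`-chamber: the closure in `P` of a connected component of the
complement in `P` of the hyperplanes `(v)⊥`, `v ∈ V`. -/
def IsChamber (B : Matrix (Fin n) (Fin n) ℤ) (P V D : Set (Fin n → ℝ)) : Prop :=
  ∃ x ∈ P, (∀ v ∈ V, pair B x v ≠ 0) ∧
    D = closure (connectedComponentIn {y ∈ P | ∀ v ∈ V, pair B y v ≠ 0} x) ∩ P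

/-- `Δ` is a defining set of the chamber `D`. -/
def IsDefSet (B : Matrix (Fin n) (Fin n) ℤ) (P Δ D : Set (Fin n → ℝ)) : Prop :=
  (∀ v ∈ Δ, isDual B v ∧ pair B v v < 0) ∧ D = SigmaCone B Δ ∩ P

/-- Condition [V3]: every `V*`-chamber has a finite defining set. -/
def CondV3 (B : Matrix (Fin n) (Fin n) ℤ) (P V : Set (Fin n → ℝ)) : Prop :=
  ∀ D, IsChamber B P V D → ∃ Δ : Set (Fin n → ℝ), Δ.Finite ∧ IsDefSet B P Δ D

/-- Condition [V4]: every boundary point of a `V*`-chamber is rational, i.e.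
every nonzero norm-zero vector of the closure of a chamber is a positive real
multiple of a rational vector. -/
def CondV4 (B : Matrix (Fin n) (Fin n) ℤ) (P V : Set (Fin n → ℝ)) : Prop :=
  ∀ D, IsChamber B P V D → ∀ x ∈ closure D, x ≠ 0 → pair B x x = 0 →
    ∃ t : ℝ, 0 < t ∧ ∃ y, isRatPt y ∧ x = t • y

/-- The action of `GL_n(ℤ)` on `L ⊗ ℝ`. -/
def act (g : (Matrix (Fin n) (Fin n) ℤ)ˣ) (x : Fin n → ℝ) : Fin n → ℝ :=
  ((g : Matrix (Fin n) (Fin n) ℤ).map ((↑) : ℤ → ℝ)).mulVec x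

/-- `g` is an isometry of `L` preserving the positive cone `P`,
i.e. an element of `O⁺(L)`. -/
def InOPlus (B : Matrix (Fin n) (Fin n) ℤ) (P : Set (Fin n → ℝ))
    (g : (Matrix (Fin n) (Fin n) ℤ)ˣ) : Prop :=
  (g : Matrix (Fin n) (Fin n) ℤ).transpose * B * (g : Matrix (Fin n) (Fin n) ℤ) = B ∧
    act g '' P = P

/-- Condition [V2]: `V` is invariant under the action of `G`. -/
def CondV2 (G : Subgroup ((Matrix (Fin n) (Fin n) ℤ)ˣ)) (V : Set (Fin n → ℝ)) : Prop :=
  ∀ g ∈ G, ∀ v ∈ V, act g v ∈ V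

/-- `(v)⊥` is a wall of the chamber `D`: it is disjoint from the interior of `D`
and `(v)⊥ ∩ D` contains a nonempty open subset of `(v)⊥`. -/
def IsWall (B : Matrix (Fin n) (Fin n) ℤ) (P : Set (Fin n → ℝ)) (v : Fin n → ℝ)
    (D : Set (Fin n → ℝ)) : Prop :=
  pair B v v < 0 ∧ perp B P v ∩ interior D = ∅ ∧
  ∃ W : Set (Fin n → ℝ), IsOpen W ∧ (W ∩ perp B P v).Nonempty ∧ W ∩ perp B P v ⊆ D

/-- `D'` is the chamber adjacent to `D` across the wall `(v)⊥`. -/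
def IsAdjacent (B : Matrix (Fin n) (Fin n) ℤ) (P V : Set (Fin n → ℝ))
    (D : Set (Fin n → ℝ)) (v : Fin n → ℝ) (D' : Set (Fin n → ℝ)) : Prop :=
  IsChamber B P V D' ∧ D' ≠ D ∧
  ∃ W : Set (Fin n → ℝ), IsOpen W ∧ (W ∩ perp B P v).Nonempty ∧
    W ∩ perp B P v ⊆ D ∩ D'

/-- `S` is (the set of real points of) a primitive sublattice of `L`. -/
def IsPrimSub (S : Submodule ℤ (Fin n → ℝ)) : Prop :=
  (∀ x ∈ S, isLat x) ∧
  ∀ x : Fin n → ℝ, isLat x → ∀ k : ℤ, k ≠ 0 → (k : ℝ) • x ∈ S → x ∈ S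

/-- `xS` is the orthogonal projection of `x` to `S ⊗ ℚ`. -/
def IsProjS (B : Matrix (Fin n) (Fin n) ℤ) (S : Submodule ℤ (Fin n → ℝ))
    (xS x : Fin n → ℝ) : Prop :=
  xS ∈ Submodule.span ℚ (S : Set (Fin n → ℝ)) ∧ ∀ s ∈ S, pair B (x - xS) s = 0

/-- The orthogonal complement `R = S⊥ ∩ L` of `S` in `L`. -/
def orthCompl (B : Matrix (Fin n) (Fin n) ℤ) (S : Submodule ℤ (Fin n → ℝ)) :
    Set (Fin n → ℝ) :=
  {x | isLat x ∧ ∀ s ∈ S, pair B x s = 0}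

/-- `P` is a positive cone of the subspace `W`. -/
def IsPosConeIn (B : Matrix (Fin n) (Fin n) ℤ) (W : Set (Fin n → ℝ))
    (P : Set (Fin n → ℝ)) : Prop :=
  ∃ x ∈ W, 0 < pair B x x ∧ P = connectedComponentIn {y ∈ W | 0 < pair B y y} x

section Aux
open Matrix
variable {n : ℕ} (B : Matrix (Fin n) (Fin n) ℤ)

lemma pair_eq_dot (x y : Fin n → ℝ) :
    pair B x y = x ⬝ᵥ ((B.map ((↑) : ℤ → ℝ)) *ᵥ y) := by
  unfold pair dotProduct Matrix.mulVec dotProduct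
  simp [Matrix.map_apply, Finset.mul_sum, mul_assoc]

lemma pair_symm (hB : B.IsSymm) (x y : Fin n → ℝ) : pair B x y = pair B y x := by
  unfold pair
  rw [Finset.sum_comm]
  congr 1; ext i; congr 1; ext j
  rw [← hB.apply i j]; ring

lemma pair_add_right (x y z : Fin n → ℝ) :
    pair B x (y + z) = pair B x y + pair B x z := by
  simp [pair_eq_dot, Matrix.mulVec_add, dotProduct_add]

lemma pair_add_left (x y z : Fin n → ℝ) :
    pair B (x + y) z = pair B x z + pair B y z := by
  simp [pair_eq_dot, add_dotProduct]

lemma pair_smul_right (t : ℝ) (x y : Fin n → ℝ) :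
    pair B x (t • y) = t * pair B x y := by
  simp [pair_eq_dot, Matrix.mulVec_smul, dotProduct_smul, smul_eq_mul]

lemma pair_smul_left (t : ℝ) (x y : Fin n → ℝ) :
    pair B (t • x) y = t * pair B x y := by
  simp [pair_eq_dot, smul_dotProduct, smul_eq_mul]

lemma pair_sub_right (x y z : Fin n → ℝ) :
    pair B x (y - z) = pair B x y - pair B x z := by
  simp [pair_eq_dot, Matrix.mulVec_sub, dotProduct_sub]

lemma pair_sub_left (x y z : Fin n → ℝ) :
    pair B (x - y) z = pair B x z - pair B y z := by
  simp [pair_eq_dot, sub_dotProduct]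

lemma pair_zero_right (x : Fin n → ℝ) : pair B x 0 = 0 := by
  simp [pair_eq_dot, Matrix.mulVec_zero]

lemma pair_zero_left (x : Fin n → ℝ) : pair B 0 x = 0 := by
  simp [pair_eq_dot]

lemma continuous_pair (y : Fin n → ℝ) : Continuous fun x => pair B x y := by
  unfold pair; fun_prop

lemma continuous_pair_quad : Continuous fun x => pair B x x := by
  unfold pair; fun_prop

end Aux
section Aux2
open Matrix
variable {n : ℕ} (B : Matrix (Fin n) (Fin n) ℤ)

lemma isRatPt_of_isLat {x : Fin n → ℝ} (h : isLat x) : isRatPt x := by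
  intro i; obtain ⟨k, hk⟩ := h i; exact ⟨(k : ℚ), by simp [hk]⟩

lemma isRatPt_sub {x y : Fin n → ℝ} (hx : isRatPt x) (hy : isRatPt y) :
    isRatPt (x - y) := by
  intro i
  obtain ⟨p, hp⟩ := hx i; obtain ⟨q, hq⟩ := hy i
  exact ⟨p - q, by simp [hp, hq]⟩

lemma isRatPt_add {x y : Fin n → ℝ} (hx : isRatPt x) (hy : isRatPt y) :
    isRatPt (x + y) := by
  intro i
  obtain ⟨p, hp⟩ := hx i; obtain ⟨q, hq⟩ := hy i
  exact ⟨p + q, by simp [hp, hq]⟩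

lemma isRatPt_qsmul {x : Fin n → ℝ} (hx : isRatPt x) (q : ℚ) :
    isRatPt ((q : ℝ) • x) := by
  intro i
  obtain ⟨p, hp⟩ := hx i
  exact ⟨q * p, by simp [hp]⟩

lemma isRatPt_zero : isRatPt (0 : Fin n → ℝ) := fun i => ⟨0, by simp⟩

/-- Every point of the `ℚ`-span of a set of rational points is rational. -/
lemma isRatPt_of_mem_spanQ {s : Set (Fin n → ℝ)} (hs : ∀ x ∈ s, isRatPt x)
    {x : Fin n → ℝ} (hx : x ∈ Submodule.span ℚ s) : isRatPt x := by
  induction hx using Submodule.span_induction with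
  | mem y hy => exact hs y hy
  | zero => exact isRatPt_zero
  | add y z _ _ hy hz => exact isRatPt_add hy hz
  | smul q y _ hy =>
      have : q • y = (q : ℝ) • y := (Rat.cast_smul_eq_qsmul ℝ q y).symm ▸ rfl
      rw [show q • y = (q : ℝ) • y from (Rat.cast_smul_eq_qsmul ℝ q y).symm]
      exact isRatPt_qsmul hy q

/-- `pair` vanishes on the `ℚ`-span if it vanishes on the set (right slot). -/
lemma pair_eq_zero_spanQ {v : Fin n → ℝ} {s : Set (Fin n → ℝ)}
    (h : ∀ x ∈ s, pair B v x = 0) {t : Fin n → ℝ}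
    (ht : t ∈ Submodule.span ℚ s) : pair B v t = 0 := by
  induction ht using Submodule.span_induction with
  | mem y hy => exact h y hy
  | zero => exact pair_zero_right B v
  | add y z _ _ hy hz => rw [pair_add_right, hy, hz, add_zero]
  | smul q y _ hy =>
      rw [show q • y = (q : ℝ) • y from (Rat.cast_smul_eq_qsmul ℝ q y).symm,
        pair_smul_right, hy, mul_zero]

/-- `pair` vanishes on the `ℝ`-span if it vanishes on the set (right slot). -/
lemma pair_eq_zero_spanR {v : Fin n → ℝ} {s : Set (Fin n → ℝ)}
    (h : ∀ x ∈ s, pair B v x = 0) {t : Fin n → ℝ}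
    (ht : t ∈ Submodule.span ℝ s) : pair B v t = 0 := by
  induction ht using Submodule.span_induction with
  | mem y hy => exact h y hy
  | zero => exact pair_zero_right B v
  | add y z _ _ hy hz => rw [pair_add_right, hy, hz, add_zero]
  | smul q y _ hy => rw [pair_smul_right, hy, mul_zero]

/-- Common denominator: a rational point has an integral positive multiple. -/
lemma ratpt_int_smul {v : Fin n → ℝ} (hv : isRatPt v) :
    ∃ N : ℤ, 0 < N ∧ isLat ((N : ℝ) • v) := by
  choose q hq using hv
  refine ⟨∏ i, ((q i).den : ℤ), ?_, ?_⟩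
  · exact Finset.prod_pos fun i _ => by exact_mod_cast (q i).pos
  · intro i
    have hd : ((q i).den : ℤ) * ∏ j ∈ Finset.univ.erase i, ((q j).den : ℤ)
        = ∏ j, ((q j).den : ℤ) :=
      Finset.mul_prod_erase Finset.univ (fun j => ((q j).den : ℤ)) (Finset.mem_univ i)
    set m : ℤ := ∏ j ∈ Finset.univ.erase i, ((q j).den : ℤ)
    refine ⟨m * (q i).num, ?_⟩
    have key : ((∏ j, ((q j).den : ℤ) : ℤ) : ℚ) * q i = ((m * (q i).num : ℤ) : ℚ) := by
      rw [← hd]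
      push_cast
      rw [mul_comm ((q i).den : ℚ) (m : ℚ), mul_assoc, mul_comm ((q i).den : ℚ) (q i),
        Rat.mul_den_eq_num]
    have := congrArg (fun r : ℚ => (r : ℝ)) key
    simp only [Rat.cast_mul, Rat.cast_intCast] at this
    have hgoal : ((∏ j, ((q j).den : ℤ) : ℤ) : ℝ) * v i = ((m * (q i).num : ℤ) : ℝ) := by
      rw [hq i]; exact_mod_cast this
    simpa [Pi.smul_apply, smul_eq_mul] using hgoal

/-- `pair` of two rational points is rational. -/
lemma pair_rat {x y : Fin n → ℝ} (hx : isRatPt x) (hy : isRatPt y) :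
    ∃ q : ℚ, pair B x y = (q : ℝ) := by
  choose p hp using hx
  choose q hq using hy
  refine ⟨∑ i, ∑ j, p i * (B i j : ℚ) * q j, ?_⟩
  unfold pair
  push_cast
  simp [hp, hq]

end Aux2
section Aux3
open Matrix
variable {n : ℕ} {B : Matrix (Fin n) (Fin n) ℤ} {S : Submodule ℤ (Fin n → ℝ)}

/-- Negative definiteness on rational points of `S^⊥`. -/
lemma perp_neg
    (hRneg : ∀ x : Fin n → ℝ, isLat x → (∀ s ∈ S, pair B x s = 0) → x ≠ 0 →
      pair B x x < 0)
    {v : Fin n → ℝ} (hv : isRatPt v) (hperp : ∀ s ∈ S, pair B v s = 0)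
    (hv0 : v ≠ 0) : pair B v v < 0 := by
  obtain ⟨N, hN, hNv⟩ := ratpt_int_smul hv
  have hN0 : (N : ℝ) ≠ 0 := by exact_mod_cast hN.ne'
  have h1 : pair B ((N:ℝ) • v) ((N:ℝ) • v) < 0 := by
    refine hRneg _ hNv ?_ ?_
    · intro s hs
      rw [pair_smul_left, hperp s hs, mul_zero]
    · exact smul_ne_zero hN0 hv0
  rw [pair_smul_left, pair_smul_right] at h1
  nlinarith [sq_nonneg (N:ℝ), mul_pos (by positivity : (0:ℝ) < (N:ℝ)) (by positivity : (0:ℝ) < (N:ℝ))]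

lemma perp_nonpos
    (hRneg : ∀ x : Fin n → ℝ, isLat x → (∀ s ∈ S, pair B x s = 0) → x ≠ 0 →
      pair B x x < 0)
    {v : Fin n → ℝ} (hv : isRatPt v) (hperp : ∀ s ∈ S, pair B v s = 0) :
    pair B v v ≤ 0 := by
  by_cases hv0 : v = 0
  · subst hv0; rw [pair_zero_left]
  · exact (perp_neg hRneg hv hperp hv0).le

/-- Cauchy–Schwarz for the negative semidefinite form on rational points
of `S^⊥`. -/
lemma perp_CS (hBs : B.IsSymm)
    (hRneg : ∀ x : Fin n → ℝ, isLat x → (∀ s ∈ S, pair B x s = 0) → x ≠ 0 →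
      pair B x x < 0)
    {p q : Fin n → ℝ} (hp : isRatPt p) (hq : isRatPt q)
    (hpperp : ∀ s ∈ S, pair B p s = 0) (hqperp : ∀ s ∈ S, pair B q s = 0) :
    (pair B p q) ^ 2 ≤ pair B p p * pair B q q := by
  have key : ∀ t : ℝ, 0 ≤ (-(pair B q q)) * (t * t) + (-(2 * pair B p q)) * t
      + (-(pair B p p)) := by
    have hsub : Set.range ((↑) : ℚ → ℝ) ⊆ {t : ℝ | 0 ≤ (-(pair B q q)) * (t * t)
        + (-(2 * pair B p q)) * t + (-(pair B p p))} := by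
      rintro _ ⟨s, rfl⟩
      have h1 : pair B (p + (s:ℝ) • q) (p + (s:ℝ) • q) ≤ 0 := by
        refine perp_nonpos hRneg ?_ ?_
        · exact isRatPt_add hp (isRatPt_qsmul hq s)
        · intro t ht
          rw [pair_add_left, pair_smul_left, hpperp t ht, hqperp t ht]; ring
      have hexp : pair B (p + (s:ℝ) • q) (p + (s:ℝ) • q)
          = pair B p p + 2 * (s:ℝ) * pair B p q + (s:ℝ)^2 * pair B q q := by
        rw [pair_add_left, pair_add_right, pair_add_right, pair_smul_left,
          pair_smul_left, pair_smul_right, pair_smul_right,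
          pair_symm B hBs q p]
        ring
      simp only [Set.mem_setOf_eq]
      nlinarith [h1, hexp]
    have hcl : IsClosed {t : ℝ | 0 ≤ (-(pair B q q)) * (t * t)
        + (-(2 * pair B p q)) * t + (-(pair B p p))} :=
      isClosed_le continuous_const (by fun_prop)
    intro t
    have ht : t ∈ closure (Set.range ((↑) : ℚ → ℝ)) := Rat.denseRange_cast t
    exact closure_minimal hsub hcl ht
  have := discrim_le_zero key
  rw [discrim] at this
  nlinarith [this]

/-- The form is negative definite on `wS^⊥ ∩ span_ℝ S`. -/
lemma negdef_perp_wS (hBs : B.IsSymm)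
    (hShyp : IsHypOn B (Submodule.span ℝ (S : Set (Fin n → ℝ))))
    {wS : Fin n → ℝ} (hwSmem : wS ∈ Submodule.span ℝ (S : Set (Fin n → ℝ)))
    (hc : 0 < pair B wS wS) :
    ∀ u ∈ Submodule.span ℝ (S : Set (Fin n → ℝ)), pair B wS u = 0 → u ≠ 0 →
      pair B u u < 0 := by
  intro u huW hu0pair hu0
  by_contra hlt
  push_neg at hlt
  rcases lt_or_eq_of_le hlt with hpos | hzero
  · have := hShyp.2.1 wS hwSmem u huW hc hpos
    rw [hu0pair] at this
    nlinarith
  · -- pair u u = 0, u ≠ 0 : use nondegeneracy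
    have hnd := hShyp.2.2
    have : ¬ (∀ y ∈ Submodule.span ℝ (S : Set (Fin n → ℝ)), pair B u y = 0) := by
      intro hall
      exact hu0 (hnd u huW hall)
    push_neg at this
    obtain ⟨v, hvW, hd⟩ := this
    set c := pair B wS wS with hcdef
    set d := pair B u v with hddef
    set b := pair B v v with hbdef
    set e := pair B wS v with hedef
    set t : ℝ := (c * |b| + e ^ 2 + c) / (2 * d * c) with htdef
    set x : Fin n → ℝ := v + t • u with hxdef
    have hxW : x ∈ Submodule.span ℝ (S : Set (Fin n → ℝ)) :=
      Submodule.add_mem _ hvW (Submodule.smul_mem _ t huW)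
    have huu : pair B u u = 0 := hzero.symm
    have hx2 : pair B x x = b + 2 * (t * d) := by
      rw [hxdef, pair_add_left, pair_add_right, pair_add_right, pair_smul_left,
        pair_smul_left, pair_smul_right, pair_smul_right, pair_symm B hBs v u,
        huu, ← hddef, ← hbdef]
      ring
    have h2td : 2 * (t * d) = (c * |b| + e ^ 2 + c) / c := by
      rw [htdef]
      field_simp
    have hxP : pair B x x = (c * b + (c * |b| + e ^ 2 + c)) / c := by
      rw [hx2, h2td]
      field_simp
    have hnum : 0 < c * b + (c * |b| + e ^ 2 + c) := by
      nlinarith [abs_nonneg b, neg_abs_le b, sq_nonneg e]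
    have hxpos : 0 < pair B x x := by
      rw [hxP]; exact div_pos hnum hc
    have hwx : pair B wS x = e := by
      rw [hxdef, pair_add_right, pair_smul_right, hu0pair, ← hedef]; ring
    have hCS := hShyp.2.1 wS hwSmem x hxW hc hxpos
    rw [hwx, hxP, mul_div_cancel₀ _ hc.ne'] at hCS
    nlinarith [abs_nonneg b, neg_abs_le b]

/-- positivity of the head term `2⟨wS,u⟩² - c u²` on `span_ℝ S`. -/
lemma head_pos (hBs : B.IsSymm)
    (hShyp : IsHypOn B (Submodule.span ℝ (S : Set (Fin n → ℝ))))
    {wS : Fin n → ℝ} (hwSmem : wS ∈ Submodule.span ℝ (S : Set (Fin n → ℝ)))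
    (hc : 0 < pair B wS wS) :
    ∀ u ∈ Submodule.span ℝ (S : Set (Fin n → ℝ)), u ≠ 0 →
      0 < 2 * (pair B wS u) ^ 2 - pair B wS wS * pair B u u := by
  intro u huW hu0
  set c := pair B wS wS with hcdef
  set a : ℝ := pair B wS u / c with hadef
  set u' : Fin n → ℝ := u - a • wS with hu'def
  have hu'W : u' ∈ Submodule.span ℝ (S : Set (Fin n → ℝ)) :=
    Submodule.sub_mem _ huW (Submodule.smul_mem _ a hwSmem)
  have hwu' : pair B wS u' = 0 := by
    rw [hu'def, pair_sub_right, pair_smul_right, hadef, ← hcdef,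
      div_mul_cancel₀ _ hc.ne', sub_self]
  have hwu : pair B wS u = a * c := by
    rw [hadef, div_mul_cancel₀ _ hc.ne']
  have huu : pair B u u = a ^ 2 * c + pair B u' u' := by
    have : u = u' + a • wS := by rw [hu'def]; abel
    rw [this, pair_add_left, pair_add_right, pair_add_right, pair_smul_left,
      pair_smul_left, pair_smul_right, pair_smul_right,
      pair_symm B hBs u' wS, hwu']
    ring
  by_cases hu' : u' = 0
  · have hane : a ≠ 0 := by
      intro ha0
      apply hu0
      have : u = u' + a • wS := by rw [hu'def]; abel
      rw [this, hu', ha0, zero_smul, add_zero]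
    have hu'0 : pair B u' u' = 0 := by rw [hu']; exact pair_zero_left B 0
    rw [hwu, huu, hu'0]
    have : 2 * (a * c) ^ 2 - c * (a ^ 2 * c + 0) = a ^ 2 * c ^ 2 := by ring
    rw [this]
    positivity
  · have hu'neg : pair B u' u' < 0 := negdef_perp_wS hBs hShyp hwSmem hc u' hu'W hwu' hu'
    rw [hwu, huu]
    nlinarith [sq_nonneg (a*c), mul_pos hc (neg_pos.mpr hu'neg)]

end Aux3
section Aux4
open Matrix
variable {n : ℕ} (B : Matrix (Fin n) (Fin n) ℤ) {S : Submodule ℤ (Fin n → ℝ)}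

lemma pair_sum_left {ι : Type*} (t : Finset ι) (f : ι → (Fin n → ℝ)) (y : Fin n → ℝ) :
    pair B (∑ i ∈ t, f i) y = ∑ i ∈ t, pair B (f i) y := by
  classical
  induction t using Finset.induction with
  | empty => simp [pair_zero_left]
  | insert _ _ h ih => rw [Finset.sum_insert h, pair_add_left, ih, Finset.sum_insert h]

lemma pair_sum_right {ι : Type*} (t : Finset ι) (f : ι → (Fin n → ℝ)) (y : Fin n → ℝ) :
    pair B y (∑ i ∈ t, f i) = ∑ i ∈ t, pair B y (f i) := by
  classical
  induction t using Finset.induction with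
  | empty => simp [pair_zero_right]
  | insert _ _ h ih => rw [Finset.sum_insert h, pair_add_right, ih, Finset.sum_insert h]

/-- Rational orthogonal decomposition: every rational point splits as a point
of `span_ℚ S` plus a rational point orthogonal to `S`. -/
lemma rat_decomp (hBs : B.IsSymm) (hSlat : ∀ x ∈ S, isLat x)
    (hnd : ∀ x ∈ Submodule.span ℝ (S : Set (Fin n → ℝ)),
      (∀ y ∈ Submodule.span ℝ (S : Set (Fin n → ℝ)), pair B x y = 0) → x = 0)
    {x : Fin n → ℝ} (hx : isRatPt x) :
    ∃ u v : Fin n → ℝ, x = u + v ∧ u ∈ Submodule.span ℚ (S : Set (Fin n → ℝ)) ∧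
      isRatPt u ∧ isRatPt v ∧ ∀ s ∈ S, pair B v s = 0 := by
  classical
  obtain ⟨b, hbS, hbspan, hbli⟩ := exists_linearIndependent ℝ (S : Set (Fin n → ℝ))
  have hbfin : b.Finite := hbli.setFinite
  letI : Fintype b := hbfin.fintype
  have hbrat : ∀ i : b, isRatPt (i : Fin n → ℝ) :=
    fun i => isRatPt_of_isLat (hSlat _ (hbS i.2))
  -- rational Gram matrix
  have hGex : ∀ i j : b, ∃ q : ℚ, pair B (i : Fin n → ℝ) (j : Fin n → ℝ) = (q : ℝ) :=
    fun i j => pair_rat B (hbrat i) (hbrat j)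
  choose G hG using hGex
  have hGsymm : ∀ i j : b, G i j = G j i := by
    intro i j
    have : ((G i j : ℚ) : ℝ) = ((G j i : ℚ) : ℝ) := by
      rw [← hG i j, ← hG j i, pair_symm B hBs]
    exact_mod_cast this
  -- elements of b span `span ℝ S` and lie in it
  have hmemW : ∀ i : b, (i : Fin n → ℝ) ∈ Submodule.span ℝ (S : Set (Fin n → ℝ)) :=
    fun i => Submodule.subset_span (hbS i.2)
  -- the Gram matrix is nonsingular over ℚ
  have hdet : (Matrix.of G).det ≠ 0 := by
    intro hdet0
    obtain ⟨cvec, hc0, hcv⟩ := Matrix.exists_mulVec_eq_zero_iff.mpr hdet0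
    set z : Fin n → ℝ := ∑ i : b, ((cvec i : ℝ)) • (i : Fin n → ℝ) with hzdef
    have hzW : z ∈ Submodule.span ℝ (S : Set (Fin n → ℝ)) :=
      Submodule.sum_mem _ fun i _ => Submodule.smul_mem _ _ (hmemW i)
    have hzperp : ∀ j : b, pair B z (j : Fin n → ℝ) = 0 := by
      intro j
      rw [hzdef, pair_sum_left]
      have : ∀ i : b, pair B (((cvec i : ℝ)) • (i : Fin n → ℝ)) (j : Fin n → ℝ)
          = ((cvec i * G i j : ℚ) : ℝ) := by
        intro i
        rw [pair_smul_left, hG i j]; push_cast; ring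
      rw [Finset.sum_congr rfl fun i _ => this i]
      have : ((Matrix.of G *ᵥ cvec) j : ℚ) = ∑ i : b, cvec i * G i j := by
        simp [Matrix.mulVec, dotProduct]
        exact Finset.sum_congr rfl fun i _ => by rw [hGsymm j i]; ring
      rw [← Rat.cast_sum]
      rw [← this, hcv]
      simp
    have hz0 : z = 0 := by
      apply hnd z hzW
      intro y hy
      rw [← hbspan] at hy
      exact pair_eq_zero_spanR B (fun t ht => hzperp ⟨t, ht⟩) hy
    have : ∀ i : b, ((cvec i : ℝ)) = 0 := by
      have := Fintype.linearIndependent_iff.mp hbli (fun i => (cvec i : ℝ))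
        (by rw [← hzdef] at *; exact hz0)
      exact this
    apply hc0
    funext i
    exact_mod_cast this i
  -- solve for the projection coefficients
  have hmx : ∀ j : b, ∃ q : ℚ, pair B x (j : Fin n → ℝ) = (q : ℝ) :=
    fun j => pair_rat B hx (hbrat j)
  choose m hm using hmx
  set cvec : b → ℚ := (Matrix.of G)⁻¹ *ᵥ m with hcdef
  have hGc : Matrix.of G *ᵥ cvec = m := by
    rw [hcdef, Matrix.mulVec_mulVec, Matrix.mul_nonsing_inv _ (isUnit_iff_ne_zero.mpr hdet), Matrix.one_mulVec]
  set u : Fin n → ℝ := ∑ i : b, ((cvec i : ℝ)) • (i : Fin n → ℝ) with hudef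
  have huQ : u ∈ Submodule.span ℚ (S : Set (Fin n → ℝ)) := by
    refine Submodule.sum_mem _ fun i _ => ?_
    rw [show ((cvec i : ℝ)) • (i : Fin n → ℝ) = cvec i • (i : Fin n → ℝ) from
      Rat.cast_smul_eq_qsmul ℝ _ _]
    exact Submodule.smul_mem _ _ (Submodule.subset_span (hbS i.2))
  have huRat : isRatPt u :=
    isRatPt_of_mem_spanQ (fun s hs => isRatPt_of_isLat (hSlat s hs)) huQ
  refine ⟨u, x - u, by abel, huQ, huRat, isRatPt_sub hx huRat, ?_⟩
  -- orthogonality to S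
  have hperpb : ∀ j : b, pair B (x - u) (j : Fin n → ℝ) = 0 := by
    intro j
    rw [pair_sub_left, hm j, hudef, pair_sum_left]
    have : ∀ i : b, pair B (((cvec i : ℝ)) • (i : Fin n → ℝ)) (j : Fin n → ℝ)
        = ((cvec i * G i j : ℚ) : ℝ) := by
      intro i
      rw [pair_smul_left, hG i j]; push_cast; ring
    rw [Finset.sum_congr rfl fun i _ => this i]
    have hmv : ((Matrix.of G *ᵥ cvec) j : ℚ) = ∑ i : b, cvec i * G i j := by
      simp [Matrix.mulVec, dotProduct]
      exact Finset.sum_congr rfl fun i _ => by rw [hGsymm j i]; ring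
    rw [← Rat.cast_sum, ← hmv, hGc]
    simp
  intro s hs
  have hsW : s ∈ Submodule.span ℝ b := by
    rw [hbspan]; exact Submodule.subset_span hs
  exact pair_eq_zero_spanR B (fun t ht => hperpb ⟨t, ht⟩) hsW

end Aux4
section Aux5
open Matrix
variable {n : ℕ} (B : Matrix (Fin n) (Fin n) ℤ) {S : Submodule ℤ (Fin n → ℝ)}

lemma continuous_pair_right (y : Fin n → ℝ) : Continuous fun x => pair B y x := by
  unfold pair; fun_prop

lemma spanQ_le_spanR {s : Set (Fin n → ℝ)} {x : Fin n → ℝ}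
    (hx : x ∈ Submodule.span ℚ s) : x ∈ Submodule.span ℝ s :=
  Submodule.span_subset_span ℚ ℝ s hx

/-- positivity of `ψ` at nonzero rational points. -/
lemma psiQ_pos (hBs : B.IsSymm) (hSlat : ∀ x ∈ S, isLat x)
    (hShyp : IsHypOn B (Submodule.span ℝ (S : Set (Fin n → ℝ))))
    (hRneg : ∀ x : Fin n → ℝ, isLat x → (∀ s ∈ S, pair B x s = 0) → x ≠ 0 →
      pair B x x < 0)
    {wS : Fin n → ℝ} (hwsQ : wS ∈ Submodule.span ℚ (S : Set (Fin n → ℝ)))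
    (hc : 0 < pair B wS wS)
    {x : Fin n → ℝ} (hx : isRatPt x) (hx0 : x ≠ 0) :
    0 < 2 * (pair B wS x) ^ 2 - pair B wS wS * pair B x x := by
  obtain ⟨u, v, hxuv, huQ, huRat, hvRat, hvperp⟩ :=
    rat_decomp B hBs hSlat hShyp.2.2 hx
  have hwSmem : wS ∈ Submodule.span ℝ (S : Set (Fin n → ℝ)) := spanQ_le_spanR hwsQ
  have huW : u ∈ Submodule.span ℝ (S : Set (Fin n → ℝ)) := spanQ_le_spanR huQ
  have hvwS : pair B wS v = 0 := by
    rw [pair_symm B hBs]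
    exact pair_eq_zero_spanQ B hvperp hwsQ
  have hvu : pair B u v = 0 := by
    rw [pair_symm B hBs]
    exact pair_eq_zero_spanQ B hvperp huQ
  have hpx : pair B wS x = pair B wS u := by
    rw [hxuv, pair_add_right, hvwS, add_zero]
  have hxx : pair B x x = pair B u u + pair B v v := by
    rw [hxuv, pair_add_left, pair_add_right, pair_add_right, hvu,
      pair_symm B hBs v u, hvu]
    ring
  have hvle : pair B v v ≤ 0 := perp_nonpos hRneg hvRat hvperp
  by_cases hu0 : u = 0
  · have hv0 : v ≠ 0 := by
      intro h; apply hx0; rw [hxuv, hu0, h, add_zero]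
    have hvlt : pair B v v < 0 := perp_neg hRneg hvRat hvperp hv0
    rw [hpx, hxx, hu0, pair_zero_right, pair_zero_left]
    nlinarith
  · have hhead := head_pos hBs hShyp hwSmem hc u huW hu0
    rw [hpx, hxx]
    nlinarith [mul_nonneg hc.le (neg_nonneg.mpr hvle)]

lemma dense_ratpts : Dense {x : Fin n → ℝ | isRatPt x} := by
  rw [Metric.dense_iff]
  intro x r hr
  have h : ∀ i, ∃ q : ℚ, |x i - (q : ℝ)| < r := fun i => exists_rat_near (x i) hr
  choose q hq using h
  refine ⟨fun i => (q i : ℝ), ?_, fun i => ⟨q i, rfl⟩⟩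
  rw [Metric.mem_ball, dist_pi_lt_iff hr]
  intro i
  rw [Real.dist_eq, abs_sub_comm]
  exact hq i

lemma psi_nonneg (hBs : B.IsSymm) (hSlat : ∀ x ∈ S, isLat x)
    (hShyp : IsHypOn B (Submodule.span ℝ (S : Set (Fin n → ℝ))))
    (hRneg : ∀ x : Fin n → ℝ, isLat x → (∀ s ∈ S, pair B x s = 0) → x ≠ 0 →
      pair B x x < 0)
    {wS : Fin n → ℝ} (hwsQ : wS ∈ Submodule.span ℚ (S : Set (Fin n → ℝ)))
    (hc : 0 < pair B wS wS) (x : Fin n → ℝ) :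
    0 ≤ 2 * (pair B wS x) ^ 2 - pair B wS wS * pair B x x := by
  have hsub : {y : Fin n → ℝ | isRatPt y} ⊆
      {y | 0 ≤ 2 * (pair B wS y) ^ 2 - pair B wS wS * pair B y y} := by
    intro y hy
    by_cases hy0 : y = 0
    · simp [hy0, pair_zero_right, pair_zero_left]
    · exact (psiQ_pos B hBs hSlat hShyp hRneg hwsQ hc hy hy0).le
  have hcl : IsClosed {y : Fin n → ℝ | 0 ≤ 2 * (pair B wS y) ^ 2
      - pair B wS wS * pair B y y} := by
    apply isClosed_le continuous_const
    have h1 := continuous_pair_right B wS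
    have h2 := continuous_pair_quad B
    fun_prop
  have hx : x ∈ closure {y : Fin n → ℝ | isRatPt y} := by
    rw [(dense_ratpts).closure_eq]; trivial
  exact closure_minimal hsub hcl hx

end Aux5
section Aux5b
open Matrix
variable {n : ℕ} (B : Matrix (Fin n) (Fin n) ℤ) {S : Submodule ℤ (Fin n → ℝ)}

lemma psi_posdef (hBs : B.IsSymm) (hSlat : ∀ x ∈ S, isLat x)
    (hShyp : IsHypOn B (Submodule.span ℝ (S : Set (Fin n → ℝ))))
    (hRneg : ∀ x : Fin n → ℝ, isLat x → (∀ s ∈ S, pair B x s = 0) → x ≠ 0 →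
      pair B x x < 0)
    {wS : Fin n → ℝ} (hwsQ : wS ∈ Submodule.span ℚ (S : Set (Fin n → ℝ)))
    (hc : 0 < pair B wS wS) :
    ∀ x : Fin n → ℝ, x ≠ 0 → 0 < 2 * (pair B wS x) ^ 2 - pair B wS wS * pair B x x := by
  -- rational data
  have hwsRat : isRatPt wS :=
    isRatPt_of_mem_spanQ (fun s hs => isRatPt_of_isLat (hSlat s hs)) hwsQ
  choose wq hwq using hwsRat
  obtain ⟨cq, hcq⟩ := pair_rat B (fun i => ⟨wq i, hwq i⟩) (fun i => ⟨wq i, hwq i⟩)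
  set αq : Fin n → ℚ := fun j => ∑ k, wq k * (B k j : ℚ) with hαdef
  have hαcast : ∀ j, ((αq j : ℚ) : ℝ) = ∑ k, wS k * (B k j : ℝ) := by
    intro j
    rw [hαdef]
    push_cast
    exact Finset.sum_congr rfl fun k _ => by rw [hwq k]
  have hα : ∀ x : Fin n → ℝ, pair B wS x = ∑ j, ((αq j : ℚ) : ℝ) * x j := by
    intro x
    calc pair B wS x = ∑ k, ∑ j, wS k * (B k j : ℝ) * x j := rfl
      _ = ∑ j, ∑ k, wS k * (B k j : ℝ) * x j := Finset.sum_comm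
      _ = ∑ j, (∑ k, wS k * (B k j : ℝ)) * x j := by
          exact Finset.sum_congr rfl fun j _ => (Finset.sum_mul ..).symm
      _ = ∑ j, ((αq j : ℚ) : ℝ) * x j :=
          Finset.sum_congr rfl fun j _ => by rw [hαcast j]
  set Aq : Matrix (Fin n) (Fin n) ℚ :=
    Matrix.of fun i j => 2 * αq i * αq j - cq * (B i j : ℚ) with hAdef
  have hAcast : ∀ i j, ((Aq j i : ℚ) : ℝ)
      = 2 * ((αq j : ℚ) : ℝ) * ((αq i : ℚ) : ℝ) - (cq : ℝ) * ((B i j : ℤ) : ℝ) := by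
    intro i j
    have h1 : Aq j i = 2 * αq j * αq i - cq * (B j i : ℚ) := rfl
    rw [h1]
    push_cast
    have : (B j i : ℝ) = (B i j : ℝ) := by exact_mod_cast congrArg Int.cast (hBs.apply i j)
    rw [this]
  have keyId : ∀ x y : Fin n → ℝ,
      2 * pair B wS x * pair B wS y - pair B wS wS * pair B x y
      = ∑ j, (∑ i, ((Aq j i : ℚ) : ℝ) * x i) * y j := by
    intro x y
    rw [hα x, hα y, hcq]
    have hR : ∑ j, (∑ i, ((Aq j i : ℚ) : ℝ) * x i) * y j
        = ∑ i, ∑ j, ((Aq j i : ℚ) : ℝ) * x i * y j := by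
      rw [Finset.sum_comm]
      exact Finset.sum_congr rfl fun j _ => Finset.sum_mul ..
    rw [hR]
    have hL : 2 * ((∑ j, ((αq j : ℚ) : ℝ) * x j) * (∑ j, ((αq j : ℚ) : ℝ) * y j))
        - (cq : ℝ) * pair B x y
        = ∑ i, ∑ j, (2 * (((αq i : ℚ) : ℝ) * x i) * (((αq j : ℚ) : ℝ) * y j)
            - (cq : ℝ) * (x i * (B i j : ℝ) * y j)) := by
      rw [Finset.sum_mul_sum]
      unfold pair
      rw [Finset.mul_sum, Finset.mul_sum, ← Finset.sum_sub_distrib]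
      refine Finset.sum_congr rfl fun i _ => ?_
      rw [Finset.mul_sum, Finset.mul_sum, ← Finset.sum_sub_distrib]
      exact Finset.sum_congr rfl fun j _ => by ring
    rw [show 2 * (∑ j, ((αq j : ℚ) : ℝ) * x j) * (∑ j, ((αq j : ℚ) : ℝ) * y j)
        = 2 * ((∑ j, ((αq j : ℚ) : ℝ) * x j) * (∑ j, ((αq j : ℚ) : ℝ) * y j)) from by ring,
      hL]
    refine Finset.sum_congr rfl fun i _ => Finset.sum_congr rfl fun j _ => ?_
    rw [hAcast i j]
    ring
  -- main argument
  intro x0 hx0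
  by_contra hle
  push_neg at hle
  have hzero : 2 * (pair B wS x0) ^ 2 - pair B wS wS * pair B x0 x0 = 0 :=
    le_antisymm hle (psi_nonneg B hBs hSlat hShyp hRneg hwsQ hc x0)
  have hbil : ∀ y : Fin n → ℝ,
      2 * pair B wS x0 * pair B wS y - pair B wS wS * pair B x0 y = 0 := by
    intro y
    have key : ∀ t : ℝ,
        0 ≤ (2 * (pair B wS y) ^ 2 - pair B wS wS * pair B y y) * (t * t)
          + (2 * (2 * pair B wS x0 * pair B wS y - pair B wS wS * pair B x0 y)) * t
          + (2 * (pair B wS x0) ^ 2 - pair B wS wS * pair B x0 x0) := by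
      intro t
      have h := psi_nonneg B hBs hSlat hShyp hRneg hwsQ hc (x0 + t • y)
      have e1 : pair B wS (x0 + t • y) = pair B wS x0 + t * pair B wS y := by
        rw [pair_add_right, pair_smul_right]
      have e2 : pair B (x0 + t • y) (x0 + t • y)
          = pair B x0 x0 + 2 * t * pair B x0 y + t ^ 2 * pair B y y := by
        rw [pair_add_left, pair_add_right, pair_add_right, pair_smul_left,
          pair_smul_left, pair_smul_right, pair_smul_right, pair_symm B hBs y x0]
        ring
      rw [e1, e2] at h
      nlinarith [h]
    have hd := discrim_le_zero key
    rw [discrim, hzero, mul_zero] at hd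
    have hb2 : (2 * (2 * pair B wS x0 * pair B wS y - pair B wS wS * pair B x0 y)) ^ 2
        ≤ 0 := by linarith
    nlinarith [sq_nonneg (2 * (2 * pair B wS x0 * pair B wS y
      - pair B wS wS * pair B x0 y)), hb2]
  have hker : ∀ j, ∑ i, ((Aq j i : ℚ) : ℝ) * x0 i = 0 := by
    intro j0
    have h := hbil (Pi.single j0 1)
    rw [keyId] at h
    simpa [Pi.single_apply, mul_ite] using h
  -- pass to ℚ
  have hkerR : (Aq.map ((↑) : ℚ → ℝ)) *ᵥ x0 = 0 := by
    funext j
    have := hker j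
    simpa [Matrix.mulVec, dotProduct, Matrix.map_apply] using this
  have hdetR : (Aq.map ((↑) : ℚ → ℝ)).det = 0 :=
    Matrix.exists_mulVec_eq_zero_iff.mp ⟨x0, hx0, hkerR⟩
  have hdetQ : Aq.det = 0 := by
    have h1 := RingHom.map_det (Rat.castHom ℝ) Aq
    rw [RingHom.mapMatrix_apply] at h1
    have h0 : ((Aq.det : ℚ) : ℝ) = 0 := h1.trans hdetR
    exact_mod_cast h0
  obtain ⟨qv, hqv0, hqvker⟩ := Matrix.exists_mulVec_eq_zero_iff.mpr hdetQ
  set xr : Fin n → ℝ := fun i => ((qv i : ℚ) : ℝ) with hxrdef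
  have hxr0 : xr ≠ 0 := by
    intro h
    apply hqv0
    funext i
    have h1 : ((qv i : ℚ) : ℝ) = 0 := by
      have := congrFun h i
      simpa [hxrdef] using this
    simp only [Pi.zero_apply]
    exact_mod_cast h1
  have hxrK : ∀ j, ∑ i, ((Aq j i : ℚ) : ℝ) * xr i = 0 := by
    intro j
    have h := congrFun hqvker j
    have h2 : ∑ i, Aq j i * qv i = 0 := by
      simpa [Matrix.mulVec, dotProduct] using h
    rw [hxrdef]
    have := congrArg (fun q : ℚ => (q : ℝ)) h2
    push_cast at this
    simpa using this
  have hpsixr : 2 * (pair B wS xr) ^ 2 - pair B wS wS * pair B xr xr = 0 := by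
    have h := keyId xr xr
    rw [show (2 : ℝ) * pair B wS xr * pair B wS xr = 2 * (pair B wS xr) ^ 2 from by ring]
      at h
    rw [h]
    refine Finset.sum_eq_zero fun j _ => ?_
    rw [hxrK j, zero_mul]
  have hpos := psiQ_pos B hBs hSlat hShyp hRneg hwsQ hc
    (x := xr) (fun i => ⟨qv i, rfl⟩) hxr0
  rw [hpsixr] at hpos
  exact lt_irrefl 0 hpos

end Aux5b
section Aux6
open Matrix
variable {n : ℕ} (B : Matrix (Fin n) (Fin n) ℤ) {S : Submodule ℤ (Fin n → ℝ)}

lemma psi_coercive (hBs : B.IsSymm) (hSlat : ∀ x ∈ S, isLat x)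
    (hShyp : IsHypOn B (Submodule.span ℝ (S : Set (Fin n → ℝ))))
    (hRneg : ∀ x : Fin n → ℝ, isLat x → (∀ s ∈ S, pair B x s = 0) → x ≠ 0 →
      pair B x x < 0)
    {wS : Fin n → ℝ} (hwsQ : wS ∈ Submodule.span ℚ (S : Set (Fin n → ℝ)))
    (hc : 0 < pair B wS wS) :
    ∃ κ : ℝ, 0 < κ ∧ ∀ x : Fin n → ℝ,
      κ * ‖x‖ ^ 2 ≤ 2 * (pair B wS x) ^ 2 - pair B wS wS * pair B x x := by
  set ψ : (Fin n → ℝ) → ℝ :=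
    fun x => 2 * (pair B wS x) ^ 2 - pair B wS wS * pair B x x with hψ
  have hcont : Continuous ψ := by
    have h1 := continuous_pair_right B wS
    have h2 := continuous_pair_quad B
    rw [hψ]; fun_prop
  have hψ0 : ψ 0 = 0 := by simp [hψ, pair_zero_left, pair_zero_right]
  have hhom : ∀ (t : ℝ) (x : Fin n → ℝ), ψ (t • x) = t ^ 2 * ψ x := by
    intro t x
    simp only [hψ]
    rw [pair_smul_right, pair_smul_left, pair_smul_right]
    ring
  by_cases htriv : ∀ x : Fin n → ℝ, x = 0
  · refine ⟨1, one_pos, fun x => ?_⟩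
    rw [htriv x]
    simp [pair_zero_right, pair_zero_left, norm_zero]
  · push_neg at htriv
    obtain ⟨x₀, hx₀⟩ := htriv
    have hsph : (Metric.sphere (0 : Fin n → ℝ) 1).Nonempty := by
      refine ⟨‖x₀‖⁻¹ • x₀, ?_⟩
      rw [mem_sphere_zero_iff_norm, norm_smul, norm_inv, norm_norm]
      exact inv_mul_cancel₀ (norm_ne_zero_iff.mpr hx₀)
    obtain ⟨z, hzmem, hzmin⟩ :=
      (isCompact_sphere (0 : Fin n → ℝ) 1).exists_isMinOn hsph hcont.continuousOn
    have hz1 : ‖z‖ = 1 := mem_sphere_zero_iff_norm.mp hzmem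
    have hz0 : z ≠ 0 := by
      intro h; rw [h, norm_zero] at hz1; exact one_ne_zero hz1.symm
    refine ⟨ψ z, psi_posdef B hBs hSlat hShyp hRneg hwsQ hc z hz0, fun x => ?_⟩
    by_cases hx : x = 0
    · rw [hx]
      simp [pair_zero_right, pair_zero_left, norm_zero]
    · have hnx : ‖x‖ ≠ 0 := norm_ne_zero_iff.mpr hx
      have humem : ‖x‖⁻¹ • x ∈ Metric.sphere (0 : Fin n → ℝ) 1 := by
        rw [mem_sphere_zero_iff_norm, norm_smul, norm_inv, norm_norm]
        exact inv_mul_cancel₀ hnx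
      have hle : ψ z ≤ ψ (‖x‖⁻¹ • x) := hzmin humem
      have hxeq : ψ x = ‖x‖ ^ 2 * ψ (‖x‖⁻¹ • x) := by
        rw [← hhom]
        congr 1
        rw [smul_smul, mul_inv_cancel₀ hnx, one_smul]
      calc ψ z * ‖x‖ ^ 2 ≤ ψ (‖x‖⁻¹ • x) * ‖x‖ ^ 2 :=
            mul_le_mul_of_nonneg_right hle (sq_nonneg _)
        _ = ψ x := by rw [hxeq]; ring

end Aux6
/-- **finiteness of `Δ_w`.**  Let `Λ` be an even lattice, `S` a
primitive hyperbolic sublattice on which the form is nondegenerate, with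
negative-definite orthogonal complement `R`.  Let `w ∈ Λ` with `(w_S)² > 0`.
Then the set `Δ_w = {r ∈ Λ : r² = -2, ⟨w,r⟩ = 1, (r_S)² < 0}` is finite. -/
theorem statement_11 {n : ℕ} (B : Matrix (Fin n) (Fin n) ℤ)
    (hB : IsEvenLat B)
    (S : Submodule ℤ (Fin n → ℝ)) (hSprim : IsPrimSub S)
    (hShyp : IsHypOn B (Submodule.span ℝ (S : Set (Fin n → ℝ))))
    (hRneg : ∀ x : Fin n → ℝ, isLat x → (∀ s ∈ S, pair B x s = 0) → x ≠ 0 →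
      pair B x x < 0)
    (w : Fin n → ℝ) (hw : isLat w)
    (hwS : ∃ wS, IsProjS B S wS w ∧ 0 < pair B wS wS) :
    {r : Fin n → ℝ | isLat r ∧ pair B r r = -2 ∧ pair B w r = 1 ∧
      ∃ rS, IsProjS B S rS r ∧ pair B rS rS < 0}.Finite := by
  classical
  obtain ⟨wS, ⟨hwsQ, hwsperp⟩, hc⟩ := hwS
  have hBs : B.IsSymm := hB.1
  have hSlat : ∀ x ∈ S, isLat x := hSprim.1
  have hSrat : ∀ x ∈ (S : Set (Fin n → ℝ)), isRatPt x :=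
    fun s hs => isRatPt_of_isLat (hSlat s hs)
  obtain ⟨κ, hκ, hcoer⟩ := psi_coercive B hBs hSlat hShyp hRneg hwsQ hc
  -- the fixed constants
  set wR : Fin n → ℝ := w - wS with hwRdef
  have hwRrat : isRatPt wR :=
    isRatPt_sub (isRatPt_of_isLat hw) (isRatPt_of_mem_spanQ hSrat hwsQ)
  set Dw : ℝ := -(pair B wR wR) with hDwdef
  have hDw0 : 0 ≤ Dw := neg_nonneg.mpr (perp_nonpos hRneg hwRrat hwsperp)
  set CC : ℝ := 4 * (1 + 2 * Dw) + 2 * pair B wS wS with hCCdef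
  set M : ℤ := ⌈Real.sqrt (CC / κ)⌉ with hMdef
  apply Set.Finite.subset (Set.Finite.image (fun k : Fin n → ℤ => fun i => ((k i : ℤ) : ℝ))
    (Set.finite_Icc (fun _ : Fin n => -M) (fun _ : Fin n => M)))
  rintro r ⟨hrlat, hr2, hwr, rS, ⟨hrSQ, hrSperp⟩, hrSneg⟩
  -- the orthogonal pieces of r
  set rR : Fin n → ℝ := r - rS with hrRdef
  have hrSrat : isRatPt rS := isRatPt_of_mem_spanQ hSrat hrSQ
  have hrRrat : isRatPt rR := isRatPt_sub (isRatPt_of_isLat hrlat) hrSrat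
  have h1 : pair B rR rS = 0 := pair_eq_zero_spanQ B hrSperp hrSQ
  have h2 : pair B rR wS = 0 := pair_eq_zero_spanQ B hrSperp hwsQ
  have h3 : pair B wR rS = 0 := pair_eq_zero_spanQ B hwsperp hrSQ
  have hr_split : r = rS + rR := by rw [hrRdef]; abel
  have hsplit : pair B r r = pair B rS rS + pair B rR rR := by
    rw [hr_split, pair_add_left, pair_add_right, pair_add_right,
      pair_symm B hBs rS rR, h1]
    ring
  have hrR2 : pair B rR rR = -2 - pair B rS rS := by
    rw [hr2] at hsplit; linarith
  have hrRle : pair B rR rR ≤ 0 := perp_nonpos hRneg hrRrat hrSperp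
  have hrRgt : -2 < pair B rR rR := by rw [hrR2]; linarith
  -- Cauchy-Schwarz bound on the residual pairing
  have hCS : (pair B wR rR) ^ 2 ≤ pair B wR wR * pair B rR rR :=
    perp_CS hBs hRneg hwRrat hrRrat hwsperp hrSperp
  have hwRle : pair B wR wR ≤ 0 := perp_nonpos hRneg hwRrat hwsperp
  have hy2 : (pair B wR rR) ^ 2 ≤ 2 * Dw := by
    rw [hDwdef]
    nlinarith [hCS, hwRle, hrRle, hrRgt]
  -- pair B wS r in terms of the residual pairing
  have hw_split : w = wS + wR := by rw [hwRdef]; abel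
  have hwsr : pair B wS r = 1 - pair B wR rR := by
    have e1 : pair B w r = pair B wS r + pair B wR r := by
      rw [hw_split, pair_add_left]
    have e2 : pair B wR r = pair B wR rR := by
      rw [hr_split, pair_add_right, h3, zero_add]
    rw [e2] at e1
    rw [hwr] at e1
    linarith
  -- the coercive bound
  have hψr : 2 * (pair B wS r) ^ 2 - pair B wS wS * pair B r r ≤ CC := by
    rw [hwsr, hr2, hCCdef]
    nlinarith [hy2, sq_nonneg (pair B wR rR), sq_nonneg (1 + pair B wR rR)]
  have hnorm2 : ‖r‖ ^ 2 ≤ CC / κ := by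
    rw [le_div_iff₀ hκ]
    calc ‖r‖ ^ 2 * κ = κ * ‖r‖ ^ 2 := by ring
      _ ≤ 2 * (pair B wS r) ^ 2 - pair B wS wS * pair B r r := hcoer r
      _ ≤ CC := hψr
  have hnorm : ‖r‖ ≤ Real.sqrt (CC / κ) := by
    rw [show ‖r‖ = Real.sqrt (‖r‖ ^ 2) from (Real.sqrt_sq (norm_nonneg r)).symm]
    exact Real.sqrt_le_sqrt hnorm2
  -- integer coordinates
  choose k hk using hrlat
  refine ⟨k, ?_, ?_⟩
  · rw [Set.mem_Icc]
    have key : ∀ i, -M ≤ k i ∧ k i ≤ M := by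
      intro i
      have hki : |((k i : ℤ) : ℝ)| ≤ (M : ℝ) := by
        rw [← hk i]
        calc |r i| = ‖r i‖ := (Real.norm_eq_abs _).symm
          _ ≤ ‖r‖ := norm_le_pi_norm r i
          _ ≤ Real.sqrt (CC / κ) := hnorm
          _ ≤ (M : ℝ) := Int.le_ceil _
      have hcast : ((|k i| : ℤ) : ℝ) ≤ (M : ℝ) := by
        rw [Int.cast_abs]; exact hki
      have habs : |k i| ≤ M := by exact_mod_cast hcast
      exact abs_le.mp habs
    exact ⟨Pi.le_def.mpr fun i => (key i).1, Pi.le_def.mpr fun i => (key i).2⟩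
  · funext i
    exact (hk i).symm

end K3Aut
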